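/- For a permutation σ of size n, let T be the binary search tree obtained by leaf insertions of the letters of σ from left to right. Then for 1 ≤ i ≤ n−1, the (i+1)-st leaf of T (in left-to-right order) is right-oriented if and only if (i, i+1) is a co-inversion of σ, i.e., σ^{-1}(i) > σ^{-1}(i+1). -/

import Mathlib

open scoped Classical

/-- Baxter adjacency relations on words over the alphabet of natural numbers. -/
def BaxterAdj (w w' : List ℕ) : Prop :=
  (∃ (a b c d : ℕ) (u v : List ℕ), a ≤ b ∧ b < c ∧ c ≤ d ∧
      w = c :: (u ++ a :: d :: (v ++ [b])) ∧ w' = c :: (u ++ d :: a :: (v ++ [b]))) ∨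
  (∃ (a b c d : ℕ) (u v : List ℕ), a < b ∧ b ≤ c ∧ c < d ∧
      w = b :: (u ++ d :: a :: (v ++ [c])) ∧ w' = b :: (u ++ a :: d :: (v ++ [c])))

/-- One rewriting step: an adjacency applied inside a word (congruence context). -/
def BaxterStep (w w' : List ℕ) : Prop :=
  ∃ (p s u v : List ℕ), BaxterAdj u v ∧ w = p ++ u ++ s ∧ w' = p ++ v ++ s

/-- The Baxter congruence: the equivalence generated by the Baxter steps. -/
def BaxterEquiv : List ℕ → List ℕ → Prop := Relation.EqvGen BaxterStep

/-- Sylvester adjacency: a c u b ≡ c a u b when a ≤ b < c. -/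
def SylvAdj (w w' : List ℕ) : Prop :=
  ∃ (a b c : ℕ) (u : List ℕ), a ≤ b ∧ b < c ∧
    w = a :: c :: (u ++ [b]) ∧ w' = c :: a :: (u ++ [b])

def SylvStep (w w' : List ℕ) : Prop :=
  ∃ (p s u v : List ℕ), SylvAdj u v ∧ w = p ++ u ++ s ∧ w' = p ++ v ++ s

def SylvEquiv : List ℕ → List ℕ → Prop := Relation.EqvGen SylvStep

/-- #-sylvester adjacency: b u a c ≡ b u c a when a < b ≤ c. -/
def SylvHAdj (w w' : List ℕ) : Prop :=
  ∃ (a b c : ℕ) (u : List ℕ), a < b ∧ b ≤ c ∧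
    w = b :: (u ++ [a, c]) ∧ w' = b :: (u ++ [c, a])

def SylvHStep (w w' : List ℕ) : Prop :=
  ∃ (p s u v : List ℕ), SylvHAdj u v ∧ w = p ++ u ++ s ∧ w' = p ++ v ++ s

def SylvHEquiv : List ℕ → List ℕ → Prop := Relation.EqvGen SylvHStep

/-- The standardized word of `u`: position `i` receives the rank of the letter `u i`
(ties broken from left to right), ranks starting at `1`. -/
def std (u : List ℕ) : List ℕ :=
  (List.range u.length).map fun i =>
    ((List.range u.length).filter fun j =>
      decide (u.getD j 0 < u.getD i 0 ∨ (u.getD j 0 = u.getD i 0 ∧ j < i))).length + 1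

/-- The maximal letter of a word. -/
def wordMax (u : List ℕ) : ℕ := u.foldr max 0

/-- The Schützenberger transformation: reverse and complement each letter w.r.t. max + 1. -/
def schutz (u : List ℕ) : List ℕ := u.reverse.map fun x => wordMax u + 1 - x

/-- Labeled binary trees. -/
inductive BT where
  | leaf : BT
  | node : BT → ℕ → BT → BT
deriving DecidableEq

/-- Leaf insertion into a left binary search tree. -/
def leafInsL : BT → ℕ → BT
  | .leaf, a => .node .leaf a .leaf
  | .node l b r, a => if a < b then .node (leafInsL l a) b r else .node l b (leafInsL r a)

/-- Leaf insertion into a right binary search tree. -/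
def leafInsR : BT → ℕ → BT
  | .leaf, a => .node .leaf a .leaf
  | .node l b r, a => if a ≤ b then .node (leafInsR l a) b r else .node l b (leafInsR r a)

/-- The lower restricted tree `T_{≤ a}` of a right binary search tree. -/
def splitLE : BT → ℕ → BT
  | .leaf, _ => .leaf
  | .node l b r, a => if b ≤ a then .node l b (splitLE r a) else splitLE l a

/-- The higher restricted tree `T_{> a}` of a right binary search tree. -/
def splitGT : BT → ℕ → BT
  | .leaf, _ => .leaf
  | .node l b r, a => if b ≤ a then splitGT r a else .node (splitGT l a) b r

/-- Root insertion into a right binary search tree. -/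
def rootIns (t : BT) (a : ℕ) : BT := .node (splitLE t a) a (splitGT t a)

/-- The left tree of the P-symbol: leaf insertions from left to right. -/
def insL (u : List ℕ) : BT := u.foldl leafInsL .leaf

/-- The right tree of the P-symbol: root insertions from left to right. -/
def insR (u : List ℕ) : BT := u.foldl rootIns .leaf

/-- The P-symbol of a word. -/
def Psymb (u : List ℕ) : BT × BT := (insL u, insR u)

/-- Unlabeled binary trees. -/
inductive UBT where
  | leaf : UBT
  | node : UBT → UBT → UBT
deriving DecidableEq

/-- The shape of a labeled binary tree. -/
def shape : BT → UBT
  | .leaf => .leaf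
  | .node l _ r => .node (shape l) (shape r)

/-- The shape of the P-symbol of a word. -/
def Pshape (u : List ℕ) : UBT × UBT := (shape (insL u), shape (insR u))

/-- Number of internal nodes. -/
def sizeU : UBT → ℕ
  | .leaf => 0
  | .node l r => sizeU l + sizeU r + 1

/-- Orientations of the leaves, from left to right: `true` means right-oriented
(the leaf is the right child of its parent); the parameter is the orientation
assigned if the tree is reduced to a leaf. -/
def loU : UBT → Bool → List Bool
  | .leaf, b => [b]
  | .node l r, _ => loU l false ++ loU r true

/-- Leaf orientations of a labeled binary tree. -/
def loB : BT → Bool → List Bool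
  | .leaf, b => [b]
  | .node l _ r, _ => loB l false ++ loB r true

/-- The canopy: orientations of the leaves except the first and the last one. -/
def canU (t : UBT) : List Bool := ((loU t false).drop 1).dropLast

/-- A pair of twin binary trees: same number of nodes and complementary canopies. -/
def IsTwin (J : UBT × UBT) : Prop :=
  sizeU J.1 = sizeU J.2 ∧ (canU J.1).length = (canU J.2).length ∧
    ∀ i < (canU J.1).length, (canU J.1).getD i false ≠ (canU J.2).getD i false

/-- `σ` is (the word of) a permutation of `{1, …, n}`. -/
def IsPerm (n : ℕ) (σ : List ℕ) : Prop := σ.Perm (List.range' 1 n)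

/-- Covering-type step of the right permutohedron (weak) order: exchange of two
adjacent letters `a < b`. -/
def PermutoStep (σ ν : List ℕ) : Prop :=
  ∃ (p s : List ℕ) (a b : ℕ), a < b ∧ σ = p ++ a :: b :: s ∧ ν = p ++ b :: a :: s

/-- The right permutohedron (weak) order. -/
def PermutoLe : List ℕ → List ℕ → Prop := Relation.ReflTransGen PermutoStep

/-- Baxter permutations: avoiding the generalized patterns 2-41-3 and 3-14-2. -/
def IsBaxterPerm (σ : List ℕ) : Prop :=
  ∀ i j k, i < j → j + 1 < k → k < σ.length →
    ¬(σ.getD (j+1) 0 < σ.getD i 0 ∧ σ.getD i 0 < σ.getD k 0 ∧ σ.getD k 0 < σ.getD j 0) ∧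
    ¬(σ.getD j 0 < σ.getD k 0 ∧ σ.getD k 0 < σ.getD i 0 ∧ σ.getD i 0 < σ.getD (j+1) 0)

/-- Inorder traversal of labels. -/
def inord : BT → List ℕ
  | .leaf => []
  | .node l b r => inord l ++ b :: inord r

/-- Left binary search tree invariant. -/
def IsBST : BT → Prop
  | .leaf => True
  | .node l b r => IsBST l ∧ IsBST r ∧ (∀ x ∈ inord l, x < b) ∧ (∀ x ∈ inord r, b ≤ x)

lemma loB_length (t : BT) (c : Bool) : (loB t c).length = (inord t).length + 1 := by
  induction t generalizing c with
  | leaf => simp [loB, inord]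
  | node l b r ihl ihr => simp [loB, inord, ihl false, ihr true]; omega

lemma getD_take {α : Type*} (L : List α) (k j : ℕ) (d : α) (h : j < k) :
    (L.take k).getD j d = L.getD j d := by
  simp [List.getD_eq_getElem?_getD, List.getElem?_take, h]

lemma getD_drop {α : Type*} (L : List α) (k j : ℕ) (d : α) :
    (L.drop k).getD j d = L.getD (k + j) d := by
  simp [List.getD_eq_getElem?_getD, List.getElem?_drop]

lemma getD_splice_lt {α : Type*} (L : List α) (k i : ℕ) (x d : α) (h : i < k)
    (hk : k ≤ L.length) : (L.take k ++ x :: L.drop k).getD i d = L.getD i d := by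
  rw [List.getD_append _ _ _ _ (by simp only [List.length_take]; omega), getD_take _ _ _ _ h]

lemma getD_splice_eq {α : Type*} (L : List α) (k : ℕ) (x d : α)
    (hk : k ≤ L.length) : (L.take k ++ x :: L.drop k).getD k d = x := by
  rw [List.getD_append_right _ _ _ _ (by simp only [List.length_take]; omega)]
  simp only [List.length_take]
  rw [show k - min k L.length = 0 by omega]
  simp

lemma getD_splice_gt {α : Type*} (L : List α) (k i : ℕ) (x d : α) (h : k < i)
    (hk : k ≤ L.length) : (L.take k ++ x :: L.drop k).getD i d = L.getD (i - 1) d := by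
  rw [List.getD_append_right _ _ _ _ (by simp only [List.length_take]; omega)]
  simp only [List.length_take]
  rw [show i - min k L.length = (i - k - 1) + 1 by omega]
  simp only [List.getD_cons_succ, getD_drop]
  congr 1; omega

/-- Key structural lemma about leaf insertion. -/
lemma leafInsL_spec (t : BT) (a : ℕ) (ht : IsBST t) :
    ∃ k, k ≤ (inord t).length ∧
      inord (leafInsL t a) = (inord t).take k ++ a :: (inord t).drop k ∧
      (∀ c, loB (leafInsL t a) c
          = (loB t c).take k ++ false :: true :: (loB t c).drop (k+1)) ∧
      IsBST (leafInsL t a) := by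
  induction t with
  | leaf =>
      refine ⟨0, by simp [inord], by simp [leafInsL, inord], fun c => by simp [leafInsL, loB], ?_⟩
      simp [leafInsL, IsBST, inord]
  | node l b r ihl ihr =>
      obtain ⟨hl, hr, hlb, hbr⟩ := ht
      by_cases hab : a < b
      · obtain ⟨k, hk, hin, hlo, hbst⟩ := ihl hl
        have hkb : k ≤ (loB l false).length := by rw [loB_length]; omega
        refine ⟨k, ?_, ?_, ?_, ?_⟩
        · simp [inord]; omega
        · rw [show leafInsL (.node l b r) a = .node (leafInsL l a) b r by
            simp [leafInsL, hab]]
          simp only [inord, hin,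
            List.take_append_of_le_length hk, List.drop_append_of_le_length hk]
          simp
        · intro c
          rw [show leafInsL (.node l b r) a = .node (leafInsL l a) b r by
            simp [leafInsL, hab]]
          have hkb1 : k + 1 ≤ (loB l false).length := by rw [loB_length]; omega
          simp only [loB, hlo false,
            List.take_append_of_le_length hkb,
            List.drop_append_of_le_length hkb1]
          simp
        · rw [show leafInsL (.node l b r) a = .node (leafInsL l a) b r by
            simp [leafInsL, hab]]
          refine ⟨hbst, hr, ?_, hbr⟩
          intro x hx
          rw [hin] at hx
          rcases (List.mem_append.1 hx) with h | h
          · exact hlb x (List.mem_of_mem_take h)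
          · rcases List.mem_cons.1 h with h | h
            · omega
            · exact hlb x (List.mem_of_mem_drop h)
      · obtain ⟨k, hk, hin, hlo, hbst⟩ := ihr hr
        have heq : leafInsL (.node l b r) a = .node l b (leafInsL r a) := by
          simp [leafInsL, hab]
        refine ⟨(inord l).length + 1 + k, ?_, ?_, ?_, ?_⟩
        · simp [inord]; omega
        · rw [heq]
          simp only [inord, hin]
          rw [show inord l ++ b :: inord r = (inord l ++ [b]) ++ inord r by simp,
            show (inord l).length + 1 + k = (inord l ++ [b]).length + k by simp,
            List.take_length_add_append, List.drop_length_add_append]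
          simp
        · intro c
          rw [heq]
          simp only [loB, hlo true]
          rw [show (inord l).length + 1 + k + 1 = (loB l false).length + (k + 1) by
              rw [loB_length]; omega,
            show (inord l).length + 1 + k = (loB l false).length + k by
              rw [loB_length],
            List.take_length_add_append, List.drop_length_add_append, List.append_assoc]
        · rw [heq]
          refine ⟨hl, hbst, hlb, ?_⟩
          intro x hx
          rw [hin] at hx
          rcases (List.mem_append.1 hx) with h | h
          · exact hbr x (List.mem_of_mem_take h)
          · rcases List.mem_cons.1 h with h | h
            · omega
            · exact hbr x (List.mem_of_mem_drop h)

lemma inord_sorted (t : BT) (ht : IsBST t) : (inord t).Pairwise (· ≤ ·) := by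
  induction t with
  | leaf => simp [inord]
  | node l b r ihl ihr =>
      obtain ⟨hl, hr, hlb, hbr⟩ := ht
      rw [inord, List.pairwise_append]
      refine ⟨ihl hl, ?_, ?_⟩
      · rw [List.pairwise_cons]
        exact ⟨hbr, ihr hr⟩
      · intro x hx y hy
        rcases List.mem_cons.1 hy with h | h
        · exact h ▸ le_of_lt (hlb x hx)
        · exact le_trans (le_of_lt (hlb x hx)) (hbr y h)

lemma insL_concat (w : List ℕ) (a : ℕ) : insL (w ++ [a]) = leafInsL (insL w) a := by
  simp [insL, List.foldl_append]

/-- Master lemma, proved by induction on the word from the right. -/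
lemma insL_master (w : List ℕ) (hnd : w.Nodup) :
    IsBST (insL w) ∧ (inord (insL w)).Perm w ∧
    ∀ i, 1 ≤ i → i < w.length →
      ((loB (insL w) false).getD i false = true ↔
        w.idxOf ((inord (insL w)).getD i 0) < w.idxOf ((inord (insL w)).getD (i-1) 0)) := by
  induction w using List.reverseRecOn with
  | nil => exact ⟨trivial, by simp [insL, inord], fun i h1 h2 => absurd h2 (by simp)⟩
  | append_singleton w a ih =>
      have hw : w.Nodup := (List.nodup_append.1 hnd).1
      have ha : a ∉ w := by
        intro h
        have := (List.nodup_append.1 hnd).2.2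
        exact this a h a (by simp) rfl
      obtain ⟨hbst, hperm, hiff⟩ := ih hw
      obtain ⟨k, hk, hin, hlo, hbst'⟩ := leafInsL_spec (insL w) a hbst
      set L := inord (insL w) with hL
      set B := loB (insL w) false with hB
      have hLlen : L.length = w.length := hperm.length_eq
      have hBlen : B.length = w.length + 1 := by rw [hB, loB_length, hLlen]
      have hmemL : ∀ j, j < L.length → L.getD j 0 ∈ w := by
        intro j hj
        rw [List.getD_eq_getElem _ _ hj]
        exact hperm.mem_iff.1 (List.getElem_mem hj)
      have hidx : ∀ x ∈ w, (w ++ [a]).idxOf x = w.idxOf x := fun x hx =>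
        List.idxOf_append_of_mem hx
      have hidxa : (w ++ [a]).idxOf a = w.length := by
        rw [List.idxOf_append_of_notMem ha]; simp
      have hidxlt : ∀ x ∈ w, w.idxOf x < w.length := fun x hx =>
        List.idxOf_lt_length_iff.2 hx
      refine ⟨by rw [insL_concat]; exact hbst', ?_, ?_⟩
      · rw [insL_concat, hin]
        refine List.perm_middle.trans ?_
        rw [List.take_append_drop]
        have h2 : (a :: w).Perm (w ++ [a]) := by
          simpa using (List.perm_middle (a := a) (l₁ := w) (l₂ := [])).symm
        exact (hperm.cons a).trans h2
      · intro i h1 h2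
        simp only [List.length_append, List.length_singleton] at h2
        rw [insL_concat, hin, hlo false, ← hB]
        have hkB : k ≤ B.length := by omega
        rcases lt_trichotomy i k with hik | hik | hik
        · -- i < k
          rw [getD_splice_lt L k i a 0 hik hk, getD_splice_lt L k (i-1) a 0 (by omega) hk]
          have hBi : (B.take k ++ false :: true :: B.drop (k+1)).getD i false
              = B.getD i false := by
            rw [List.getD_append _ _ _ _ (by simp only [List.length_take]; omega), getD_take _ _ _ _ hik]
          rw [hBi, hidx _ (hmemL i (by omega)), hidx _ (hmemL (i-1) (by omega))]
          exact hiff i h1 (by omega)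
        · -- i = k
          subst hik
          rw [getD_splice_eq L i a 0 hk, getD_splice_lt L i (i-1) a 0 (by omega) hk]
          have hBi : (B.take i ++ false :: true :: B.drop (i+1)).getD i false = false := by
            rw [List.getD_append_right _ _ _ _ (by simp only [List.length_take]; omega)]
            simp only [List.length_take]
            rw [show i - min i B.length = 0 by omega]
            simp
          rw [hBi, hidxa, hidx _ (hmemL (i-1) (by omega))]
          simp only [Bool.false_eq_true, false_iff, not_lt]
          have := hidxlt _ (hmemL (i-1) (by omega))
          omega
        · -- i > k
          rw [getD_splice_gt L k i a 0 hik hk, hidx _ (hmemL (i-1) (by omega))]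
          rcases eq_or_lt_of_le (show k + 1 ≤ i from hik) with hik1 | hik1
          · -- i = k + 1
            have hi1 : i - 1 = k := by omega
            rw [hi1, getD_splice_eq L k a 0 hk, hidxa, ← hik1]
            have hBi : (B.take k ++ false :: true :: B.drop (k+1)).getD (k+1) false
                = true := by
              rw [List.getD_append_right _ _ _ _ (by simp only [List.length_take]; omega)]
              simp only [List.length_take]
              rw [show k + 1 - min k B.length = 1 by omega]
              simp
            rw [hBi]
            simp only [true_iff]
            exact lt_of_lt_of_le (hidxlt _ (hmemL k (by omega))) (by omega)
          · -- i ≥ k + 2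
            rw [getD_splice_gt L k (i-1) a 0 (by omega) hk,
              hidx _ (hmemL (i-1-1) (by omega))]
            have hBi : (B.take k ++ false :: true :: B.drop (k+1)).getD i false
                = B.getD (i-1) false := by
              rw [List.getD_append_right _ _ _ _ (by simp only [List.length_take]; omega)]
              simp only [List.length_take]
              rw [show i - min k B.length = (i - k - 2) + 1 + 1 by omega]
              simp only [List.getD_cons_succ, getD_drop]
              congr 1; omega
            rw [hBi]
            exact hiff (i-1) (by omega) (by omega)
      
/-- for a permutation `σ` of size `n`, the `(i+1)`-st leaf of the
binary search tree obtained by leaf insertions of `σ` from left to right is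
right-oriented iff `(i, i+1)` is a co-inversion of `σ`. -/
theorem leaf_orientation_iff_coinversion (n : ℕ) (σ : List ℕ) (hσ : IsPerm n σ) :
    ∀ i, 1 ≤ i → i ≤ n - 1 →
      ((loB (insL σ) false).getD i false = true ↔ σ.idxOf (i + 1) < σ.idxOf i) := by
  intro i h1 h2
  have hnd : σ.Nodup := hσ.nodup_iff.2 List.nodup_range'
  obtain ⟨hbst, hperm, hiff⟩ := insL_master σ hnd
  have hlen : σ.length = n := by simpa using hσ.length_eq
  have hn : i + 1 ≤ n := by omega
  have hLeq : inord (insL σ) = List.range' 1 n := by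
    refine List.Perm.eq_of_pairwise' (inord_sorted _ hbst) ?_ (hperm.trans hσ)
    exact (List.pairwise_lt_range' (s := 1) (n := n)).imp le_of_lt
  have hi : i < σ.length := by omega
  have hgi : (List.range' 1 n).getD i 0 = i + 1 := by
    rw [List.getD_eq_getElem _ _ (by simpa using hn), List.getElem_range']
    omega
  have hgi1 : (List.range' 1 n).getD (i-1) 0 = i := by
    rw [List.getD_eq_getElem _ _ (by simp; omega), List.getElem_range']
    omega
  have := hiff i h1 hi
  rwa [hLeq, hgi, hgi1] at this
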